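/- For X, Y ∈ ℝ^{M×N} with K_X = C X Xᵀ C and K_Y = C Y Yᵀ C (C the centering matrix), X and Y have the same representational dissimilarity matrix (all pairwise Euclidean distances between rows agree) if and only if the Procrustes size-and-shape distance min_{QᵀQ=I} ‖C X − C Y Q‖_F equals zero. -/

import Mathlib

open Matrix

lemma real_conjTranspose_eq {m n : ℕ} (A : Matrix (Fin m) (Fin n) ℝ) : Aᴴ = Aᵀ := rfl

lemma psd_tmul {m n : ℕ} (A : Matrix (Fin m) (Fin n) ℝ) : (Aᵀ * A).PosSemidef := by
  have h := Matrix.posSemidef_conjTranspose_mul_self A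
  rwa [real_conjTranspose_eq] at h

lemma psd_gram {m n : ℕ} (A : Matrix (Fin m) (Fin n) ℝ) : (A * Aᵀ).PosSemidef := by
  have h := Matrix.posSemidef_self_mul_conjTranspose A
  rwa [real_conjTranspose_eq] at h

/-- The square root of a positive semidefinite matrix, as defined in the older Mathlib
(`Matrix.PosSemidef.sqrt`, since removed). -/
noncomputable def Matrix.PosSemidef.sqrt {n : Type*} [Fintype n] [DecidableEq n]
    {A : Matrix n n ℝ} (hA : A.PosSemidef) : Matrix n n ℝ :=
  hA.1.eigenvectorUnitary.1 * diagonal ((√·) ∘ hA.1.eigenvalues) *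
    (star hA.1.eigenvectorUnitary : Matrix n n ℝ)

lemma Matrix.PosSemidef.posSemidef_sqrt {n : Type*} [Fintype n] [DecidableEq n]
    {A : Matrix n n ℝ} (hA : A.PosSemidef) : PosSemidef hA.sqrt := by
  apply PosSemidef.mul_mul_conjTranspose_same
  exact posSemidef_diagonal_iff.mpr fun i ↦ Real.sqrt_nonneg _

lemma psd_sand {M : ℕ} {Kx Ky : Matrix (Fin M) (Fin M) ℝ} (hx : Kx.PosSemidef) (hy : Ky.PosSemidef) :
    (hx.sqrt * Ky * hx.sqrt).PosSemidef := by
  have h := hy.mul_mul_conjTranspose_same hx.sqrt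
  rwa [hx.posSemidef_sqrt.isHermitian.eq] at h

/-- Nuclear norm: sum of singular values, i.e. `Tr[(AᵀA)^{1/2}]`. -/
noncomputable def nuclearNorm {m n : ℕ} (A : Matrix (Fin m) (Fin n) ℝ) : ℝ :=
  (Matrix.PosSemidef.sqrt (psd_tmul A)).trace

/-- Frobenius norm. -/
noncomputable def frobNorm {m n : ℕ} (A : Matrix (Fin m) (Fin n) ℝ) : ℝ :=
  Real.sqrt (Matrix.trace (Aᵀ * A))

/-- Fidelity `Tr[(Kx^{1/2} Ky Kx^{1/2})^{1/2}]` between PSD matrices. -/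
noncomputable def fidelity {M : ℕ} {Kx Ky : Matrix (Fin M) (Fin M) ℝ}
    (hx : Kx.PosSemidef) (hy : Ky.PosSemidef) : ℝ :=
  (Matrix.PosSemidef.sqrt (psd_sand hx hy)).trace


noncomputable def rowMap {m n : ℕ} (A : Matrix (Fin m) (Fin n) ℝ) :
    EuclideanSpace ℝ (Fin m) →ₗ[ℝ] EuclideanSpace ℝ (Fin n) where
  toFun x := WithLp.toLp 2 (fun l => ∑ i, x i * A i l)
  map_add' x y := by
    ext l
    simp [add_mul, Finset.sum_add_distrib]
  map_smul' c x := by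
    ext l
    simp [Finset.mul_sum, mul_assoc]

lemma rowMap_inner {m n : ℕ} (A : Matrix (Fin m) (Fin n) ℝ) (x y : EuclideanSpace ℝ (Fin m)) :
    inner ℝ (rowMap A x) (rowMap A y) = ∑ i, ∑ j, x i * y j * (A * Aᵀ) i j := by
  simp only [PiLp.inner_apply, Real.inner_apply, conj_trivial, rowMap, LinearMap.coe_mk,
    AddHom.coe_mk, PiLp.toLp_apply, Matrix.mul_apply, Matrix.transpose_apply, Finset.sum_mul, Finset.mul_sum]
  conv_rhs => rw [Finset.sum_comm]
  rw [Finset.sum_comm]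
  refine Finset.sum_congr rfl fun i _ => ?_
  rw [Finset.sum_comm]
  refine Finset.sum_congr rfl fun j _ => ?_
  refine Finset.sum_congr rfl fun l _ => ?_
  ring

lemma rowMap_single {m n : ℕ} (A : Matrix (Fin m) (Fin n) ℝ) (i : Fin m) :
    rowMap A (EuclideanSpace.single i 1) = (WithLp.toLp 2 (fun l => A i l) : EuclideanSpace ℝ (Fin n)) := by
  ext l
  simp [rowMap, EuclideanSpace.single_apply]

lemma gram_exists_orth {m n : ℕ} (A B : Matrix (Fin m) (Fin n) ℝ) (h : A * Aᵀ = B * Bᵀ) :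
    ∃ Q : Matrix (Fin n) (Fin n) ℝ, Qᵀ * Q = 1 ∧ A = B * Q := by
  classical
  set f := rowMap A with hf
  set g := rowMap B with hg
  have hinner : ∀ x y : EuclideanSpace ℝ (Fin m), inner ℝ (f x) (f y) = inner ℝ (g x) (g y) := by
    intro x y; rw [hf, hg, rowMap_inner, rowMap_inner, h]
  have hn : ∀ x, ‖f x‖ = ‖g x‖ := by
    intro x
    have h1 := hinner x x
    rw [real_inner_self_eq_norm_sq, real_inner_self_eq_norm_sq] at h1
    rw [← Real.sqrt_sq (norm_nonneg (f x)), ← Real.sqrt_sq (norm_nonneg (g x)), h1]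
  have hker : LinearMap.ker g ≤ LinearMap.ker f := by
    intro x hx
    rw [LinearMap.mem_ker] at hx ⊢
    have := hn x
    rw [hx, norm_zero, norm_eq_zero] at this
    exact this
  set S := LinearMap.range g with hS
  let L0 : S →ₗ[ℝ] EuclideanSpace ℝ (Fin n) :=
    ((LinearMap.ker g).liftQ f hker).comp g.quotKerEquivRange.symm.toLinearMap
  have hL0 : ∀ x : EuclideanSpace ℝ (Fin m),
      L0 ⟨g x, LinearMap.mem_range_self g x⟩ = f x := by
    intro x
    have hsymm : g.quotKerEquivRange.symm ⟨g x, LinearMap.mem_range_self g x⟩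
        = Submodule.Quotient.mk x := by
      apply g.quotKerEquivRange.injective
      rw [LinearEquiv.apply_symm_apply]
      exact Subtype.ext (g.quotKerEquivRange_apply_mk x).symm
    simp only [L0, LinearMap.comp_apply, LinearEquiv.coe_toLinearMap, hsymm,
      Submodule.liftQ_apply]
  let L : S →ₗᵢ[ℝ] EuclideanSpace ℝ (Fin n) :=
    { toLinearMap := L0
      norm_map' := by
        rintro ⟨s, x, hx⟩
        have hs : (⟨s, ⟨x, hx⟩⟩ : S) = ⟨g x, LinearMap.mem_range_self g x⟩ :=
          Subtype.ext hx.symm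
        rw [hs, hL0]
        have : ‖(⟨g x, LinearMap.mem_range_self g x⟩ : S)‖ = ‖g x‖ := rfl
        rw [this, hn] }
  let R := L.extend
  have hR : ∀ x, R (g x) = f x := by
    intro x
    have : g x = ((⟨g x, LinearMap.mem_range_self g x⟩ : S) : EuclideanSpace ℝ (Fin n)) := rfl
    rw [this, LinearIsometry.extend_apply]
    exact hL0 x
  refine ⟨Matrix.of (fun k l => R (EuclideanSpace.single k 1) l), ?_, ?_⟩
  · rw [← mul_eq_one_comm]
    ext k p
    rw [Matrix.mul_apply, Matrix.one_apply]
    have e1 : ∑ l, Matrix.of (fun k l => R (EuclideanSpace.single k 1) l) k l *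
          (Matrix.of (fun k l => R (EuclideanSpace.single k 1) l))ᵀ l p
        = inner ℝ (R (EuclideanSpace.single k 1)) (R (EuclideanSpace.single p 1)) := by
      simp only [PiLp.inner_apply, Real.inner_apply, conj_trivial, Matrix.transpose_apply,
        Matrix.of_apply]
    have e2 : inner ℝ (R (EuclideanSpace.single k 1)) (R (EuclideanSpace.single p 1))
        = inner ℝ (EuclideanSpace.single k (1:ℝ)) (EuclideanSpace.single p (1:ℝ)) :=
      R.inner_map_map _ _
    have e3 : inner ℝ (EuclideanSpace.single k (1:ℝ)) (EuclideanSpace.single p (1:ℝ))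
        = (if k = p then 1 else 0) := by
      rcases eq_or_ne k p with rfl | hkp
      · simp [PiLp.inner_apply, RCLike.inner_apply, EuclideanSpace.single_apply]
      · have hz : ∀ x, (EuclideanSpace.single k (1:ℝ)) x * (EuclideanSpace.single p (1:ℝ)) x
            = 0 := by
          intro x
          by_cases hx : x = k
          · subst hx; simp [EuclideanSpace.single_apply, hkp]
          · simp [EuclideanSpace.single_apply, hx]
        simp only [PiLp.inner_apply, Real.inner_apply, conj_trivial, hz,
          Finset.sum_const_zero, if_neg hkp]
    rw [e1, e2, e3]
  · ext i l
    have h1 : A i l = f (EuclideanSpace.single i 1) l := by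
      rw [hf, rowMap_single]
    have h2 : g (EuclideanSpace.single i 1) = ∑ k, B i k • EuclideanSpace.single k 1 := by
      rw [hg, rowMap_single]
      ext l'
      rw [WithLp.ofLp_sum, Finset.sum_apply]
      simp [EuclideanSpace.single_apply, Finset.sum_ite_eq]
    rw [h1, ← hR, h2, map_sum]
    rw [Matrix.mul_apply, WithLp.ofLp_sum, Finset.sum_apply]
    refine Finset.sum_congr rfl fun k _ => ?_
    rw [_root_.map_smul]
    rfl

-- per-coordinate expansion facts
lemma sum_sub_sq_left {M : ℕ} (v : Fin M → ℝ) (a : ℝ) :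
    ∑ l, (a - v l) ^ 2 = (M : ℝ) * a ^ 2 - 2 * a * (∑ l, v l) + ∑ l, (v l) ^ 2 := by
  have : ∀ l, (a - v l) ^ 2 = a ^ 2 - 2 * a * v l + (v l) ^ 2 := fun l => by ring
  simp only [this, Finset.sum_add_distrib, Finset.sum_sub_distrib, Finset.sum_const,
    Finset.card_univ, Fintype.card_fin, nsmul_eq_mul, Finset.mul_sum]

lemma perk {M : ℕ} (hM : (M : ℝ) ≠ 0) (v : Fin M → ℝ) (a b : ℝ) :
    (a - (M : ℝ)⁻¹ * ∑ l, v l) * (b - (M : ℝ)⁻¹ * ∑ l, v l) =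
      -(1/2) * ((a - b) ^ 2 - (M : ℝ)⁻¹ * (∑ l, (a - v l) ^ 2)
        - (M : ℝ)⁻¹ * (∑ l, (v l - b) ^ 2)
        + (M : ℝ)⁻¹ * ((M : ℝ)⁻¹ * ∑ l, ∑ p, (v l - v p) ^ 2)) := by
  have hA : ∑ l, (a - v l) ^ 2
      = (M : ℝ) * a ^ 2 - 2 * a * (∑ l, v l) + ∑ l, (v l) ^ 2 := sum_sub_sq_left v a
  have hB : ∑ l, (v l - b) ^ 2
      = (M : ℝ) * b ^ 2 - 2 * b * (∑ l, v l) + ∑ l, (v l) ^ 2 := by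
    have : ∀ l, (v l - b) ^ 2 = (b - v l) ^ 2 := fun l => by ring
    rw [Finset.sum_congr rfl fun l _ => this l, sum_sub_sq_left v b]
  have hC : ∑ l, ∑ p, (v l - v p) ^ 2
      = 2 * (M : ℝ) * (∑ l, (v l) ^ 2) - 2 * (∑ l, v l) ^ 2 := by
    have : ∀ l, ∑ p, (v l - v p) ^ 2
        = (M : ℝ) * (v l) ^ 2 - 2 * (v l) * (∑ p, v p) + ∑ p, (v p) ^ 2 :=
      fun l => sum_sub_sq_left v (v l)
    rw [Finset.sum_congr rfl fun l _ => this l]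
    simp only [Finset.sum_add_distrib, Finset.sum_sub_distrib, ← Finset.mul_sum,
      ← Finset.sum_mul, Finset.sum_const, Finset.card_univ, Fintype.card_fin, nsmul_eq_mul]
    ring
  rw [hA, hB, hC]
  field_simp
  ring

lemma gram_formula {M N : ℕ} (hM : (M : ℝ) ≠ 0) (X : Matrix (Fin M) (Fin N) ℝ) (i j : Fin M) :
    ∑ k, (X i k - (M : ℝ)⁻¹ * ∑ l, X l k) * (X j k - (M : ℝ)⁻¹ * ∑ l, X l k)
      = -(1/2) * ((∑ k, (X i k - X j k) ^ 2)
        - (M : ℝ)⁻¹ * (∑ l, ∑ k, (X i k - X l k) ^ 2)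
        - (M : ℝ)⁻¹ * (∑ l, ∑ k, (X l k - X j k) ^ 2)
        + (M : ℝ)⁻¹ * ((M : ℝ)⁻¹ * ∑ l, ∑ p, ∑ k, (X l k - X p k) ^ 2)) := by
  have e2 : ∑ l, ∑ k, (X i k - X l k) ^ 2 = ∑ k, ∑ l, (X i k - X l k) ^ 2 := Finset.sum_comm
  have e3 : ∑ l, ∑ k, (X l k - X j k) ^ 2 = ∑ k, ∑ l, (X l k - X j k) ^ 2 := Finset.sum_comm
  have e4 : ∑ l, ∑ p, ∑ k, (X l k - X p k) ^ 2 = ∑ k, ∑ l, ∑ p, (X l k - X p k) ^ 2 := by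
    rw [show (∑ l, ∑ p, ∑ k, (X l k - X p k) ^ 2) = ∑ l, ∑ k, ∑ p, (X l k - X p k) ^ 2 from
      Finset.sum_congr rfl fun l _ => Finset.sum_comm]
    exact Finset.sum_comm
  rw [e2, e3, e4]
  rw [Finset.mul_sum ((Finset.univ : Finset (Fin N))) _ ((M:ℝ)⁻¹),
    Finset.mul_sum ((Finset.univ : Finset (Fin N))) _ ((M:ℝ)⁻¹),
    Finset.mul_sum ((Finset.univ : Finset (Fin N))) _ ((M:ℝ)⁻¹),
    Finset.mul_sum ((Finset.univ : Finset (Fin N))) _ ((M:ℝ)⁻¹)]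
  rw [← Finset.sum_sub_distrib, ← Finset.sum_sub_distrib, ← Finset.sum_add_distrib,
    Finset.mul_sum]
  refine Finset.sum_congr rfl fun k _ => ?_
  have := perk hM (fun l => X l k) (X i k) (X j k)
  simpa [Finset.mul_sum] using this

lemma centered_apply {M N : ℕ} (C : Matrix (Fin M) (Fin M) ℝ)
    (hC : C = 1 - (M : ℝ)⁻¹ • Matrix.of (fun _ _ => (1 : ℝ)))
    (Z : Matrix (Fin M) (Fin N) ℝ) (i : Fin M) (k : Fin N) :
    (C * Z) i k = Z i k - (M : ℝ)⁻¹ * ∑ l, Z l k := by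
  subst hC
  rw [Matrix.mul_apply]
  simp only [Matrix.sub_apply, Matrix.smul_apply, Matrix.of_apply, Matrix.one_apply,
    smul_eq_mul, mul_one, sub_mul, ite_mul, one_mul, zero_mul]
  rw [Finset.sum_sub_distrib, Finset.sum_ite_eq, Finset.mul_sum]
  simp

lemma gram_entry {M N : ℕ} (A : Matrix (Fin M) (Fin N) ℝ) (i j : Fin M) :
    (A * Aᵀ) i j = ∑ k, A i k * A j k := by
  rw [Matrix.mul_apply]
  simp [Matrix.transpose_apply]

/-- distances are determined by the centered Gram matrix -/
lemma dist_of_gram {M N : ℕ} (C : Matrix (Fin M) (Fin M) ℝ)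
    (hC : C = 1 - (M : ℝ)⁻¹ • Matrix.of (fun _ _ => (1 : ℝ)))
    (X : Matrix (Fin M) (Fin N) ℝ) (i j : Fin M) :
    ∑ k, (X i k - X j k) ^ 2
      = ((C * X) * (C * X)ᵀ) i i + ((C * X) * (C * X)ᵀ) j j - 2 * ((C * X) * (C * X)ᵀ) i j := by
  rw [gram_entry, gram_entry, gram_entry]
  rw [Finset.mul_sum, ← Finset.sum_add_distrib, ← Finset.sum_sub_distrib]
  refine Finset.sum_congr rfl fun k _ => ?_
  have hi := centered_apply C hC X i k
  have hj := centered_apply C hC X j k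
  have hd : X i k - X j k = (C * X) i k - (C * X) j k := by rw [hi, hj]; ring
  rw [hd]
  ring

/-- centered Gram matrix is determined by distances -/
lemma gram_of_dist {M N : ℕ} (hM : (M : ℝ) ≠ 0) (C : Matrix (Fin M) (Fin M) ℝ)
    (hC : C = 1 - (M : ℝ)⁻¹ • Matrix.of (fun _ _ => (1 : ℝ)))
    (X Y : Matrix (Fin M) (Fin N) ℝ)
    (hd : ∀ i j, ∑ k, (X i k - X j k) ^ 2 = ∑ k, (Y i k - Y j k) ^ 2) :
    (C * X) * (C * X)ᵀ = (C * Y) * (C * Y)ᵀ := by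
  ext i j
  rw [gram_entry, gram_entry]
  have hX : ∑ k, (C * X) i k * (C * X) j k
      = ∑ k, (X i k - (M : ℝ)⁻¹ * ∑ l, X l k) * (X j k - (M : ℝ)⁻¹ * ∑ l, X l k) :=
    Finset.sum_congr rfl fun k _ => by rw [centered_apply C hC X i k, centered_apply C hC X j k]
  have hY : ∑ k, (C * Y) i k * (C * Y) j k
      = ∑ k, (Y i k - (M : ℝ)⁻¹ * ∑ l, Y l k) * (Y j k - (M : ℝ)⁻¹ * ∑ l, Y l k) :=
    Finset.sum_congr rfl fun k _ => by rw [centered_apply C hC Y i k, centered_apply C hC Y j k]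
  rw [hX, hY, gram_formula hM X i j, gram_formula hM Y i j]
  rw [hd i j]
  congr 1
  rw [show (∑ l, ∑ k, (X i k - X l k) ^ 2) = ∑ l, ∑ k, (Y i k - Y l k) ^ 2 from
    Finset.sum_congr rfl fun l _ => hd i l]
  rw [show (∑ l, ∑ k, (X l k - X j k) ^ 2) = ∑ l, ∑ k, (Y l k - Y j k) ^ 2 from
    Finset.sum_congr rfl fun l _ => hd l j]
  rw [show (∑ l, ∑ p, ∑ k, (X l k - X p k) ^ 2) = ∑ l, ∑ p, ∑ k, (Y l k - Y p k) ^ 2 from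
    Finset.sum_congr rfl fun l _ => Finset.sum_congr rfl fun p _ => hd l p]


lemma trace_tmul_eq {m n : ℕ} (A : Matrix (Fin m) (Fin n) ℝ) :
    Matrix.trace (Aᵀ * A) = ∑ j, ∑ i, (A i j) ^ 2 := by
  rw [Matrix.trace]
  refine Finset.sum_congr rfl fun j _ => ?_
  rw [Matrix.diag_apply, Matrix.mul_apply]
  refine Finset.sum_congr rfl fun i _ => ?_
  rw [Matrix.transpose_apply]; ring

lemma trace_tmul_nonneg {m n : ℕ} (A : Matrix (Fin m) (Fin n) ℝ) :
    0 ≤ Matrix.trace (Aᵀ * A) := by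
  rw [trace_tmul_eq]
  exact Finset.sum_nonneg fun j _ => Finset.sum_nonneg fun i _ => sq_nonneg _

lemma frobNorm_nonneg {m n : ℕ} (A : Matrix (Fin m) (Fin n) ℝ) : 0 ≤ frobNorm A :=
  Real.sqrt_nonneg _

lemma frobNorm_eq_zero {m n : ℕ} {A : Matrix (Fin m) (Fin n) ℝ} (h : frobNorm A = 0) :
    A = 0 := by
  rw [frobNorm, Real.sqrt_eq_zero (trace_tmul_nonneg A), trace_tmul_eq] at h
  ext i j
  have h1 := (Finset.sum_eq_zero_iff_of_nonneg
    (fun j _ => Finset.sum_nonneg fun i _ => sq_nonneg (A i j))).mp h j (Finset.mem_univ j)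
  have h2 := (Finset.sum_eq_zero_iff_of_nonneg fun i _ => sq_nonneg (A i j)).mp h1 i
    (Finset.mem_univ i)
  simpa using (pow_eq_zero_iff two_ne_zero).mp h2

lemma frobNorm_zero {m n : ℕ} : frobNorm (0 : Matrix (Fin m) (Fin n) ℝ) = 0 := by
  simp [frobNorm]

lemma orth_set_compact (N : ℕ) :
    IsCompact {Q : Matrix (Fin N) (Fin N) ℝ | Qᵀ * Q = 1} := by
  have h1 : IsCompact ((Set.univ.pi fun _ : Fin N =>
      (Set.univ.pi fun _ : Fin N => Set.Icc (-1:ℝ) 1)) : Set (Matrix (Fin N) (Fin N) ℝ)) :=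
    isCompact_univ_pi fun _ => isCompact_univ_pi fun _ => isCompact_Icc
  refine IsCompact.of_isClosed_subset h1 ?_ ?_
  · have hcont : Continuous fun Q : Matrix (Fin N) (Fin N) ℝ => Qᵀ * Q :=
      (continuous_id.matrix_transpose).matrix_mul continuous_id
    exact isClosed_singleton.preimage hcont
  · intro Q hQ
    have key : ∀ i j, -1 ≤ Q i j ∧ Q i j ≤ 1 := by
      intro i j
      have hcol : ∑ i, Q i j ^ 2 = 1 := by
        have := congrFun (congrFun hQ j) j
        rw [Matrix.mul_apply] at this
        simp only [Matrix.transpose_apply] at this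
        rw [Matrix.one_apply_eq] at this
        rw [← this]
        exact Finset.sum_congr rfl fun i _ => by ring
      have hle : Q i j ^ 2 ≤ 1 := by
        rw [← hcol]
        exact Finset.single_le_sum (fun l _ => sq_nonneg (Q l j)) (Finset.mem_univ i)
      exact abs_le.mp ((sq_le_one_iff_abs_le_one (Q i j)).mp hle)
    exact fun i _ => fun j _ => Set.mem_Icc.mpr (key i j)

lemma frob_continuous {M N : ℕ} (C : Matrix (Fin M) (Fin M) ℝ) (X Y : Matrix (Fin M) (Fin N) ℝ) :
    Continuous fun Q : Matrix (Fin N) (Fin N) ℝ => frobNorm (C * X - C * Y * Q) := by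
  have hA : Continuous fun Q : Matrix (Fin N) (Fin N) ℝ => C * X - C * Y * Q :=
    continuous_const.sub (continuous_const.matrix_mul continuous_id)
  have ht : Continuous fun Q : Matrix (Fin N) (Fin N) ℝ =>
      Matrix.trace ((C * X - C * Y * Q)ᵀ * (C * X - C * Y * Q)) :=
    (hA.matrix_transpose.matrix_mul hA).matrix_trace
  exact Real.continuous_sqrt.comp ht

theorem rdm_eq_iff_procrustes_zero (M N : ℕ) (X Y : Matrix (Fin M) (Fin N) ℝ)
    (C : Matrix (Fin M) (Fin M) ℝ)
    (hC : C = 1 - (M : ℝ)⁻¹ • Matrix.of (fun _ _ => (1 : ℝ))) :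
    (∀ i j : Fin M,
        Real.sqrt (∑ k, (X i k - X j k) ^ 2) = Real.sqrt (∑ k, (Y i k - Y j k) ^ 2)) ↔
      sInf {t : ℝ | ∃ Q : Matrix (Fin N) (Fin N) ℝ, Qᵀ * Q = 1 ∧
        t = frobNorm (C * X - C * Y * Q)} = 0 := by
  constructor
  · intro hsq
    have hd : ∀ i j, ∑ k, (X i k - X j k) ^ 2 = ∑ k, (Y i k - Y j k) ^ 2 := by
      intro i j
      exact (Real.sqrt_inj (Finset.sum_nonneg fun _ _ => sq_nonneg _)
        (Finset.sum_nonneg fun _ _ => sq_nonneg _)).mp (hsq i j)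
    have hg : (C * X) * (C * X)ᵀ = (C * Y) * (C * Y)ᵀ := by
      rcases Nat.eq_zero_or_pos M with hM0 | hMpos
      · subst hM0
        ext i j
        exact i.elim0
      · exact gram_of_dist (Nat.cast_ne_zero.mpr hMpos.ne') C hC X Y hd
    obtain ⟨Q, hQ, hEq⟩ := gram_exists_orth (C * X) (C * Y) hg
    have h0 : (0 : ℝ) ∈ {t : ℝ | ∃ Q : Matrix (Fin N) (Fin N) ℝ, Qᵀ * Q = 1 ∧
        t = frobNorm (C * X - C * Y * Q)} := by
      refine ⟨Q, hQ, ?_⟩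
      have : C * X - C * Y * Q = 0 := by
        rw [Matrix.mul_assoc] at hEq ⊢
        rw [← hEq]
        exact sub_self _
      rw [this, frobNorm_zero]
    have hlb : ∀ t ∈ {t : ℝ | ∃ Q : Matrix (Fin N) (Fin N) ℝ, Qᵀ * Q = 1 ∧
        t = frobNorm (C * X - C * Y * Q)}, (0 : ℝ) ≤ t := by
      rintro t ⟨Q', _, ht'⟩
      rw [ht']
      exact frobNorm_nonneg _
    apply le_antisymm
    · exact csInf_le ⟨0, hlb⟩ h0
    · exact le_csInf ⟨0, h0⟩ hlb
  · intro hinf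
    have hSeq : {t : ℝ | ∃ Q : Matrix (Fin N) (Fin N) ℝ, Qᵀ * Q = 1 ∧
        t = frobNorm (C * X - C * Y * Q)}
        = (fun Q : Matrix (Fin N) (Fin N) ℝ => frobNorm (C * X - C * Y * Q)) ''
          {Q : Matrix (Fin N) (Fin N) ℝ | Qᵀ * Q = 1} := by
      ext t
      constructor
      · rintro ⟨Q, h1, h2⟩; exact ⟨Q, h1, h2.symm⟩
      · rintro ⟨Q, h1, h2⟩; exact ⟨Q, h1, h2.symm⟩
    have hcomp : IsCompact {t : ℝ | ∃ Q : Matrix (Fin N) (Fin N) ℝ, Qᵀ * Q = 1 ∧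
        t = frobNorm (C * X - C * Y * Q)} := by
      rw [hSeq]
      exact (orth_set_compact N).image (frob_continuous C X Y)
    have hne : Set.Nonempty {t : ℝ | ∃ Q : Matrix (Fin N) (Fin N) ℝ, Qᵀ * Q = 1 ∧
        t = frobNorm (C * X - C * Y * Q)} := ⟨frobNorm (C * X - C * Y * 1), 1, by simp, rfl⟩
    have hmem := hcomp.sInf_mem hne
    rw [hinf] at hmem
    obtain ⟨Q, hQ, hf⟩ := hmem
    have hz : C * X - C * Y * Q = 0 := frobNorm_eq_zero hf.symm
    have hEq : C * X = C * Y * Q := sub_eq_zero.mp hz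
    have hQQ : Q * Qᵀ = 1 := mul_eq_one_comm.mp hQ
    have hg : (C * X) * (C * X)ᵀ = (C * Y) * (C * Y)ᵀ := by
      rw [hEq, Matrix.transpose_mul, Matrix.mul_assoc (C * Y) Q (Qᵀ * (C * Y)ᵀ),
        ← Matrix.mul_assoc Q Qᵀ ((C * Y)ᵀ), hQQ, Matrix.one_mul]
    intro i j
    congr 1
    rw [dist_of_gram C hC X i j, dist_of_gram C hC Y i j, hg]
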